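/- Let (T_t)_{t≥0} be a positive one-parameter contraction semigroup (strongly continuous) acting on ℓᵖ(X) for a countable set X and 1 ≤ p < ∞. Then the peripheral point spectrum of its generator contains no nonzero element: if f ∈ ℓᵖ(X), θ ∈ ℝ, f ≠ 0, and T_t f = e^{iθt} f for all t ≥ 0, then θ = 0. -/

import Mathlib

open MeasureTheory Filter Topology

namespace PPSaux

open Complex

variable {X : Type*} [Countable X] [MeasurableSpace X] [MeasurableSingletonClass X]
  {p : ENNReal}

lemma ae_all {P : X → Prop} (h : ∀ᵐ x ∂(Measure.count : Measure X), P x) (x : X) : P x := by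
  by_contra hx
  rw [ae_iff, Measure.count_eq_zero_iff] at h
  exact Set.eq_empty_iff_forall_notMem.mp h x hx

lemma lp_ext {g h : Lp ℂ p (Measure.count : Measure X)} (hgh : ∀ x, g x = h x) : g = h :=
  Lp.ext (Filter.Eventually.of_forall hgh)

lemma eval_add (g h : Lp ℂ p (Measure.count : Measure X)) (x : X) :
    (g + h) x = g x + h x :=
  ae_all (Lp.coeFn_add g h) x

lemma eval_sub (g h : Lp ℂ p (Measure.count : Measure X)) (x : X) :
    (g - h) x = g x - h x :=
  ae_all (Lp.coeFn_sub g h) x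

lemma eval_smul (c : ℂ) (g : Lp ℂ p (Measure.count : Measure X)) (x : X) :
    (c • g) x = c * g x :=
  ae_all (Lp.coeFn_smul c g) x

lemma eval_zero (x : X) : (0 : Lp ℂ p (Measure.count : Measure X)) x = 0 :=
  ae_all (Lp.coeFn_zero ℂ p _) x

lemma eLpNorm_eq_tsum (hp0 : p ≠ 0) (hpt : p ≠ ⊤) (g : Lp ℂ p (Measure.count : Measure X)) :
    eLpNorm (⇑g) p (Measure.count : Measure X)
      = (∑' x, (‖g x‖₊ : ENNReal) ^ p.toReal) ^ (1 / p.toReal) := by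
  simp only [eLpNorm_eq_lintegral_rpow_enorm_toReal hp0 hpt, lintegral_count, enorm_eq_nnnorm]

lemma eval_norm_le (hp0 : p ≠ 0) (hpt : p ≠ ⊤) (g : Lp ℂ p (Measure.count : Measure X))
    (x : X) : ‖g x‖ ≤ ‖g‖ := by
  have hq : 0 < p.toReal := ENNReal.toReal_pos hp0 hpt
  have h1 : (‖g x‖₊ : ENNReal) ≤ eLpNorm (⇑g) p (Measure.count : Measure X) := by
    rw [eLpNorm_eq_tsum hp0 hpt]
    calc (‖g x‖₊ : ENNReal)
        = ((‖g x‖₊ : ENNReal) ^ p.toReal) ^ (1 / p.toReal) := by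
          rw [one_div, ENNReal.rpow_rpow_inv hq.ne']
      _ ≤ _ := ENNReal.rpow_le_rpow (ENNReal.le_tsum x) (by positivity)
  have h2 := ENNReal.toReal_mono (Lp.eLpNorm_ne_top g) h1
  rw [Lp.norm_def]
  simpa using h2

lemma eval_norm_eq (hp0 : p ≠ 0) (hpt : p ≠ ⊤) (g h : Lp ℂ p (Measure.count : Measure X))
    (hle : ∀ x, ‖g x‖ ≤ ‖h x‖) (hn : ‖h‖ ≤ ‖g‖) (x : X) : ‖h x‖ = ‖g x‖ := by
  have hq : 0 < p.toReal := ENNReal.toReal_pos hp0 hpt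
  set a : X → ENNReal := fun y => (‖g y‖₊ : ENNReal) ^ p.toReal with ha
  set b : X → ENNReal := fun y => (‖h y‖₊ : ENNReal) ^ p.toReal with hb
  have hab : ∀ y, a y ≤ b y := by
    intro y
    apply ENNReal.rpow_le_rpow _ hq.le
    exact_mod_cast hle y
  have hsa : ∑' y, a y ≠ ⊤ := by
    intro htop
    have := Lp.eLpNorm_ne_top g
    rw [eLpNorm_eq_tsum hp0 hpt, ← ha, htop,
      ENNReal.top_rpow_of_pos (by positivity)] at this
    exact this rfl
  have hsum : ∑' y, b y ≤ ∑' y, a y := by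
    have h2 : eLpNorm (⇑h) p (Measure.count : Measure X)
        ≤ eLpNorm (⇑g) p (Measure.count : Measure X) := by
      rw [Lp.norm_def, Lp.norm_def] at hn
      exact (ENNReal.toReal_le_toReal (Lp.eLpNorm_ne_top h) (Lp.eLpNorm_ne_top g)).mp hn
    rw [eLpNorm_eq_tsum hp0 hpt, eLpNorm_eq_tsum hp0 hpt, ← ha, ← hb] at h2
    have h3 := ENNReal.rpow_le_rpow h2 hq.le
    rwa [one_div, ENNReal.rpow_inv_rpow hq.ne', ENNReal.rpow_inv_rpow hq.ne'] at h3
  have hba : b x ≤ a x := by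
    by_contra hc
    push_neg at hc
    exact absurd (lt_of_lt_of_le (ENNReal.tsum_lt_tsum hsa hab hc) hsum) (lt_irrefl _)
  have heq : a x = b x := le_antisymm (hab x) hba
  have heq2 : (‖g x‖₊ : ENNReal) = (‖h x‖₊ : ENNReal) := by
    have := congrArg (fun z => z ^ (p.toReal)⁻¹) heq
    simpa [ha, hb, ENNReal.rpow_rpow_inv hq.ne'] using this
  have : ‖g x‖₊ = ‖h x‖₊ := by exact_mod_cast heq2
  calc ‖h x‖ = (‖h x‖₊ : ℝ) := (coe_nnnorm _).symm
    _ = (‖g x‖₊ : ℝ) := by rw [this]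
    _ = ‖g x‖ := coe_nnnorm _

noncomputable def mapLp (φ : ℂ → ℂ) (hφ : ∀ z, ‖φ z‖ ≤ ‖z‖)
    (g : Lp ℂ p (Measure.count : Measure X)) : Lp ℂ p (Measure.count : Measure X) :=
  MemLp.toLp (fun x => φ (g x))
    (MemLp.of_le (Lp.memLp g) (measurable_of_countable _).aestronglyMeasurable
      (Filter.Eventually.of_forall fun x => hφ (g x)))

lemma mapLp_coeFn (φ : ℂ → ℂ) (hφ : ∀ z, ‖φ z‖ ≤ ‖z‖)
    (g : Lp ℂ p (Measure.count : Measure X)) :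
    ⇑(mapLp φ hφ g) =ᵐ[(Measure.count : Measure X)] fun x => φ (g x) :=
  MemLp.coeFn_toLp _

lemma mapLp_apply (φ : ℂ → ℂ) (hφ : ∀ z, ‖φ z‖ ≤ ‖z‖)
    (g : Lp ℂ p (Measure.count : Measure X)) (x : X) :
    mapLp φ hφ g x = φ (g x) :=
  ae_all (mapLp_coeFn φ hφ g) x

lemma norm_coe_real (r : ℝ) : ‖((r : ℝ) : ℂ)‖ = |r| := by
  rw [Complex.norm_real, Real.norm_eq_abs]

noncomputable def absL (g : Lp ℂ p (Measure.count : Measure X)) :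
    Lp ℂ p (Measure.count : Measure X) :=
  mapLp (fun z => ((‖z‖ : ℝ) : ℂ)) (fun z => by rw [norm_coe_real, abs_norm]) g

lemma absL_apply (g : Lp ℂ p (Measure.count : Measure X)) (x : X) :
    absL g x = ((‖g x‖ : ℝ) : ℂ) :=
  mapLp_apply _ _ g x

noncomputable def conjL (g : Lp ℂ p (Measure.count : Measure X)) :
    Lp ℂ p (Measure.count : Measure X) :=
  mapLp (starRingEnd ℂ) (fun z => by simp) g

lemma conjL_apply (g : Lp ℂ p (Measure.count : Measure X)) (x : X) :
    conjL g x = starRingEnd ℂ (g x) :=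
  mapLp_apply _ _ g x

lemma conjL_coeFn (g : Lp ℂ p (Measure.count : Measure X)) :
    ⇑(conjL g) =ᵐ[(Measure.count : Measure X)] fun x => starRingEnd ℂ (g x) :=
  mapLp_coeFn _ _ g

lemma reL_norm_le (z : ℂ) : ‖((z.re : ℝ) : ℂ)‖ ≤ ‖z‖ := by
  rw [norm_coe_real]; exact Complex.abs_re_le_norm z

noncomputable def reL (g : Lp ℂ p (Measure.count : Measure X)) :
    Lp ℂ p (Measure.count : Measure X) :=
  mapLp (fun z => ((z.re : ℝ) : ℂ)) reL_norm_le g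

lemma reL_apply (g : Lp ℂ p (Measure.count : Measure X)) (x : X) :
    reL g x = (((g x).re : ℝ) : ℂ) :=
  mapLp_apply _ _ g x

lemma reL_eq (h : Lp ℂ p (Measure.count : Measure X)) :
    reL h = (2⁻¹ : ℂ) • (h + conjL h) := by
  apply lp_ext
  intro x
  rw [reL_apply, eval_smul, eval_add, conjL_apply]
  rw [Complex.add_conj (h x)]
  push_cast
  ring

lemma absL_nonneg (g : Lp ℂ p (Measure.count : Measure X)) (x : X) :
    ((absL g) x).im = 0 ∧ 0 ≤ ((absL g) x).re := by
  rw [absL_apply]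
  constructor
  · simp
  · simp [norm_nonneg]

end PPSaux

open PPSaux Complex

set_option maxHeartbeats 1000000 in
/-- Theorem 9: a strongly continuous positive contraction semigroup on `ℓᵖ(X)`
(`X` countable, `1 ≤ p < ∞`) has no nonzero element in the peripheral point
spectrum of its generator: `T_t f = e^{iθt} f` for all `t ≥ 0` with `f ≠ 0`
forces `θ = 0`. -/
theorem peripheral_point_spectrum_trivial_lp
    {X : Type*} [Countable X] [MeasurableSpace X] [MeasurableSingletonClass X]
    (p : ENNReal) [Fact (1 ≤ p)] (hp : p ≠ ⊤)
    (T : ℝ → Lp ℂ p (Measure.count : Measure X) →L[ℂ] Lp ℂ p (Measure.count : Measure X))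
    (hT0 : T 0 = 1)
    (hsem : ∀ s t : ℝ, 0 ≤ s → 0 ≤ t → T (s + t) = (T s).comp (T t))
    (hcontr : ∀ t : ℝ, 0 ≤ t → ∀ g, ‖T t g‖ ≤ ‖g‖)
    (hcont : ∀ f, Continuous fun t : ℝ => T t f)
    (hpos : ∀ t : ℝ, 0 ≤ t → ∀ g : Lp ℂ p (Measure.count : Measure X),
      (∀ᵐ x ∂(Measure.count : Measure X), (g x).im = 0 ∧ 0 ≤ (g x).re) →
      ∀ᵐ x ∂(Measure.count : Measure X), ((T t g) x).im = 0 ∧ 0 ≤ ((T t g) x).re)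
    (hconj : ∀ t : ℝ, 0 ≤ t → ∀ g gc : Lp ℂ p (Measure.count : Measure X),
      (⇑gc =ᵐ[(Measure.count : Measure X)] fun x => starRingEnd ℂ (g x)) →
      ⇑(T t gc) =ᵐ[(Measure.count : Measure X)] fun x => starRingEnd ℂ ((T t g) x))
    (f : Lp ℂ p (Measure.count : Measure X)) (hf : f ≠ 0) (θ : ℝ)
    (heig : ∀ t : ℝ, 0 ≤ t → T t f = Complex.exp (Complex.I * (θ * t)) • f) :
    θ = 0 := by
  classical
  have hp0 : p ≠ 0 := by
    have h1 : (1 : ENNReal) ≤ p := Fact.out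
    exact fun h => by simp [h] at h1
  -- pointwise positivity transfer
  have hTpos : ∀ t : ℝ, 0 ≤ t → ∀ g : Lp ℂ p (Measure.count : Measure X),
      (∀ x, (g x).im = 0 ∧ 0 ≤ (g x).re) →
      ∀ x, ((T t g) x).im = 0 ∧ 0 ≤ ((T t g) x).re := by
    intro t ht g hg x
    exact ae_all (hpos t ht g (Filter.Eventually.of_forall hg)) x
  -- conjugation commutes
  have hTconj : ∀ t : ℝ, 0 ≤ t → ∀ h : Lp ℂ p (Measure.count : Measure X),
      T t (conjL h) = conjL (T t h) := by
    intro t ht h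
    apply lp_ext
    intro x
    have h1 := ae_all (hconj t ht h (conjL h) (conjL_coeFn h)) x
    rw [h1, conjL_apply]
  -- real part commutes
  have hTre : ∀ t : ℝ, 0 ≤ t → ∀ (h : Lp ℂ p (Measure.count : Measure X)) (x : X),
      (T t (reL h)) x = (((T t h) x).re : ℂ) := by
    intro t ht h x
    rw [reL_eq h, _root_.map_smul, map_add, hTconj t ht h]
    rw [eval_smul, eval_add, conjL_apply]
    rw [Complex.add_conj ((T t h) x)]
    push_cast
    ring
  -- domination: ‖(T t g) x‖ ≤ ((T t (absL g)) x).re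
  have hdom : ∀ t : ℝ, 0 ≤ t → ∀ (g : Lp ℂ p (Measure.count : Measure X)) (x : X),
      ‖(T t g) x‖ ≤ ((T t (absL g)) x).re := by
    intro t ht g x
    have hω : ∀ ω : ℂ, ‖ω‖ = 1 →
        (ω * (T t g) x).re ≤ ((T t (absL g)) x).re := by
      intro ω hω1
      have hwpos : ∀ y, ((absL g - reL (ω • g)) y).im = 0 ∧
          0 ≤ ((absL g - reL (ω • g)) y).re := by
        intro y
        rw [eval_sub, absL_apply, reL_apply, eval_smul]
        constructor
        · simp
        · have h1 : (ω * g y).re ≤ ‖g y‖ := by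
            have h2 := Complex.re_le_norm (ω * g y)
            rw [norm_mul] at h2
            calc (ω * g y).re ≤ ‖ω‖ * ‖g y‖ := h2
              _ = ‖g y‖ := by
                  rw [hω1, one_mul]
          simp only [Complex.sub_re, Complex.ofReal_re]
          linarith
      have h3 := (hTpos t ht _ hwpos x).2
      rw [_root_.map_sub, eval_sub] at h3
      rw [hTre t ht (ω • g) x] at h3
      rw [_root_.map_smul, eval_smul] at h3
      simp only [Complex.sub_re, Complex.ofReal_re] at h3
      linarith
    by_cases hz : (T t g) x = 0
    · rw [hz, norm_zero]
      exact (hTpos t ht (absL g) (absL_nonneg g) x).2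
    · have hz0 : ‖(T t g) x‖ ≠ 0 := norm_ne_zero_iff.mpr hz
      have hω1 : ‖((‖(T t g) x‖ : ℝ) : ℂ)⁻¹ * starRingEnd ℂ ((T t g) x)‖ = 1 := by
        rw [norm_mul, norm_inv, norm_coe_real, abs_norm, RCLike.norm_conj]
        exact inv_mul_cancel₀ hz0
      have hcomp : ((((‖(T t g) x‖ : ℝ) : ℂ)⁻¹ * starRingEnd ℂ ((T t g) x)) * (T t g) x).re
          = ‖(T t g) x‖ := by
        rw [mul_assoc]
        have h4 : starRingEnd ℂ ((T t g) x) * (T t g) x = ((‖(T t g) x‖ ^ 2 : ℝ) : ℂ) := by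
          rw [mul_comm, Complex.mul_conj]
          norm_cast
          rw [Complex.normSq_eq_norm_sq]
        rw [h4, ← Complex.ofReal_inv, ← Complex.ofReal_mul, Complex.ofReal_re]
        rw [sq, ← mul_assoc, inv_mul_cancel₀ hz0, one_mul]
      have := hω _ hω1
      rwa [hcomp] at this
  have hexp_norm : ∀ t : ℝ, ‖Complex.exp (Complex.I * (θ * t))‖ = 1 := by
    intro t
    rw [Complex.norm_exp]
    simp
  -- |f| is fixed by the semigroup
  have hu_fix : ∀ t : ℝ, 0 ≤ t → T t (absL f) = absL f := by
    intro t ht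
    have h1 : ∀ x, ‖(absL f) x‖ ≤ ‖(T t (absL f)) x‖ := by
      intro x
      have hux : ‖(absL f) x‖ = ‖f x‖ := by
        rw [absL_apply, norm_coe_real, abs_norm]
      have hfx : ‖f x‖ = ‖(T t f) x‖ := by
        rw [heig t ht, eval_smul, norm_mul, hexp_norm, one_mul]
      have h2 : ‖(T t f) x‖ ≤ ((T t (absL f)) x).re := hdom t ht f x
      have h3 : ((T t (absL f)) x).re ≤ ‖(T t (absL f)) x‖ := by
        exact Complex.re_le_norm _
      linarith
    have h2 : ∀ x, ‖(T t (absL f)) x‖ = ‖(absL f) x‖ :=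
      eval_norm_eq hp0 hp (absL f) (T t (absL f)) h1 (hcontr t ht (absL f))
    have h3 := hTpos t ht (absL f) (absL_nonneg f)
    apply lp_ext
    intro x
    have him := (h3 x).1
    have hre := (h3 x).2
    have h4 : (T t (absL f)) x = (((T t (absL f)) x).re : ℂ) := by
      apply Complex.ext
      · simp
      · simp [him]
    have h5 : ‖(T t (absL f)) x‖ = ((T t (absL f)) x).re := by
      conv_lhs => rw [h4]
      rw [norm_coe_real, _root_.abs_of_nonneg hre]
    have h6 : ‖(absL f) x‖ = ‖f x‖ := by
      rw [absL_apply, norm_coe_real, abs_norm]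
    rw [h4, absL_apply]
    congr 1
    rw [← h5, h2 x, h6]
  -- a point where f is nonzero
  have hx0 : ∃ x, f x ≠ 0 := by
    by_contra h
    push_neg at h
    refine hf (lp_ext fun x => ?_)
    rw [h x, eval_zero]
  obtain ⟨x₀, hfx₀⟩ := hx0
  have hM0 : 0 < ‖f x₀‖ := norm_pos_iff.mpr hfx₀
  -- the indicator
  have hμx₀ : (Measure.count : Measure X) {x₀} ≠ ⊤ := by
    rw [Measure.count_singleton]; exact ENNReal.one_ne_top
  set δ : Lp ℂ p (Measure.count : Measure X) :=
    indicatorConstLp p (measurableSet_singleton x₀) hμx₀ (1 : ℂ) with hδdef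
  have hδ : ∀ x, δ x = if x = x₀ then 1 else 0 := by
    intro x
    have h1 := ae_all (indicatorConstLp_coeFn (p := p) (hs := measurableSet_singleton x₀)
      (hμs := hμx₀) (c := (1 : ℂ))) x
    rw [hδdef, h1, Set.indicator_apply]
    simp [Set.mem_singleton_iff]
  have hδpos : ∀ x, (δ x).im = 0 ∧ 0 ≤ (δ x).re := by
    intro x
    rw [hδ x]
    by_cases h : x = x₀
    · rw [if_pos h]
      norm_num
    · rw [if_neg h]
      norm_num
  -- key inequality at a time t when the diagonal entry is positive
  have hkey : ∀ t : ℝ, 0 ≤ t → 0 < ((T t δ) x₀).re → Real.cos (θ * t) = 1 := by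
    intro t ht hk
    have hκpos := hTpos t ht δ hδpos x₀
    have hκ : (T t δ) x₀ = ((((T t δ) x₀).re : ℝ) : ℂ) := by
      apply Complex.ext
      · simp
      · simp [hκpos.1]
    have hf'app : ∀ x, (f - f x₀ • δ) x = f x - f x₀ * δ x := by
      intro x; rw [eval_sub, eval_smul]
    have habs' : absL (f - f x₀ • δ) = absL f - ((‖f x₀‖ : ℝ) : ℂ) • δ := by
      apply lp_ext
      intro x
      rw [absL_apply, eval_sub, eval_smul, eval_sub, eval_smul, absL_apply, hδ x]
      by_cases hx : x = x₀
      · subst hx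
        simp
      · simp [hx]
    have hTabs' : T t (absL (f - f x₀ • δ))
        = absL f - ((‖f x₀‖ : ℝ) : ℂ) • T t δ := by
      rw [habs', _root_.map_sub, _root_.map_smul, hu_fix t ht]
    have hrhs : ((T t (absL (f - f x₀ • δ))) x₀).re
        = ‖f x₀‖ - ‖f x₀‖ * ((T t δ) x₀).re := by
      rw [hTabs', eval_sub, eval_smul, absL_apply]
      conv_lhs => rw [hκ]
      rw [← Complex.ofReal_mul, ← Complex.ofReal_sub, Complex.ofReal_re]
    have hlhs : (T t (f - f x₀ • δ)) x₀
        = f x₀ * (Complex.exp (Complex.I * (θ * t)) - ((((T t δ) x₀).re : ℝ) : ℂ)) := by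
      rw [_root_.map_sub, _root_.map_smul, eval_sub, eval_smul, heig t ht, eval_smul]
      conv_lhs => rw [hκ]
      ring
    have hineq := hdom t ht (f - f x₀ • δ) x₀
    rw [hrhs, hlhs, norm_mul] at hineq
    have hineq2 : ‖Complex.exp (Complex.I * (θ * t)) - ((((T t δ) x₀).re : ℝ) : ℂ)‖
        ≤ 1 - ((T t δ) x₀).re := by
      have h5 : ‖f x₀‖ * ‖Complex.exp (Complex.I * (θ * t)) - ((((T t δ) x₀).re : ℝ) : ℂ)‖
          ≤ ‖f x₀‖ * (1 - ((T t δ) x₀).re) := by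
        calc ‖f x₀‖ * ‖Complex.exp (Complex.I * (θ * t)) - ((((T t δ) x₀).re : ℝ) : ℂ)‖
            ≤ ‖f x₀‖ - ‖f x₀‖ * ((T t δ) x₀).re := hineq
          _ = ‖f x₀‖ * (1 - ((T t δ) x₀).re) := by ring
      exact le_of_mul_le_mul_left h5 hM0
    -- translate to cos/sin
    have hcform : Complex.exp (Complex.I * (θ * t))
        = Complex.exp (((θ * t : ℝ) : ℂ) * Complex.I) := by
      push_cast
      ring_nf
    have hsq2 : (Real.cos (θ * t) - ((T t δ) x₀).re) ^ 2 + Real.sin (θ * t) ^ 2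
        ≤ (1 - ((T t δ) x₀).re) ^ 2 := by
      have h6 : ‖Complex.exp (Complex.I * (θ * t)) - ((((T t δ) x₀).re : ℝ) : ℂ)‖ ^ 2
          ≤ (1 - ((T t δ) x₀).re) ^ 2 := by
        have h7 := mul_self_le_mul_self (norm_nonneg _) hineq2
        rw [← pow_two, ← pow_two] at h7
        exact h7
      have hcre : (Complex.exp (Complex.I * (θ * t))).re = Real.cos (θ * t) := by
        rw [hcform, Complex.exp_ofReal_mul_I_re]
      have hcim : (Complex.exp (Complex.I * (θ * t))).im = Real.sin (θ * t) := by
        rw [hcform, Complex.exp_ofReal_mul_I_im]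
      have h8 : ‖Complex.exp (Complex.I * (θ * t)) - ((((T t δ) x₀).re : ℝ) : ℂ)‖ ^ 2
          = (Real.cos (θ * t) - ((T t δ) x₀).re) ^ 2 + Real.sin (θ * t) ^ 2 := by
        rw [Complex.sq_norm, Complex.normSq_apply, Complex.sub_re,
          Complex.sub_im, hcre, hcim, Complex.ofReal_re, Complex.ofReal_im]
        ring
      linarith [h8 ▸ h6]
    have htrig := Real.sin_sq_add_cos_sq (θ * t)
    have hcos1 := Real.cos_le_one (θ * t)
    nlinarith [hk, hsq2, htrig, hcos1]
  -- continuity of t ↦ ((T t δ) x₀).re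
  have hevcont : Continuous fun g : Lp ℂ p (Measure.count : Measure X) => g x₀ := by
    apply (LipschitzWith.of_dist_le_mul (K := 1) ?_).continuous
    intro a b
    rw [NNReal.coe_one, one_mul, dist_eq_norm, dist_eq_norm]
    calc ‖a x₀ - b x₀‖ = ‖(a - b) x₀‖ := by rw [eval_sub]
      _ ≤ ‖a - b‖ := eval_norm_le hp0 hp (a - b) x₀
  have hFcont : Continuous fun t : ℝ => ((T t δ) x₀).re :=
    Complex.continuous_re.comp (hevcont.comp (hcont δ))
  have hF0 : ((T 0 δ) x₀).re = 1 := by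
    rw [hT0, ContinuousLinearMap.one_apply, hδ x₀]
    simp
  have hev : ∀ᶠ t in 𝓝 (0 : ℝ), 0 < ((T t δ) x₀).re := by
    have hc : ContinuousAt (fun t : ℝ => ((T t δ) x₀).re) 0 := hFcont.continuousAt
    have hmem : (fun t : ℝ => ((T t δ) x₀).re) 0 ∈ Set.Ioi (0 : ℝ) := by
      show (0 : ℝ) < ((T 0 δ) x₀).re
      rw [hF0]
      norm_num
    exact hc.eventually_mem (isOpen_Ioi.mem_nhds hmem)
  rw [Metric.eventually_nhds_iff] at hev
  obtain ⟨ε, hε0, hε⟩ := hev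
  -- conclude
  by_contra hθ
  have hθabs : 0 < |θ| := abs_pos.mpr hθ
  have hπ := Real.pi_pos
  have ht0 : 0 < min (ε / 2) (Real.pi / |θ|) := lt_min (by linarith) (div_pos hπ hθabs)
  have htε : min (ε / 2) (Real.pi / |θ|) < ε :=
    lt_of_le_of_lt (min_le_left _ _) (by linarith)
  have hkt : 0 < ((T (min (ε / 2) (Real.pi / |θ|)) δ) x₀).re := by
    apply hε
    rw [Real.dist_eq, sub_zero, _root_.abs_of_pos ht0]
    exact htε
  have hcos := hkey _ ht0.le hkt
  rw [Real.cos_eq_one_iff] at hcos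
  obtain ⟨n, hn⟩ := hcos
  have htπ : |θ * min (ε / 2) (Real.pi / |θ|)| ≤ Real.pi := by
    rw [abs_mul, _root_.abs_of_pos ht0]
    calc |θ| * min (ε / 2) (Real.pi / |θ|) ≤ |θ| * (Real.pi / |θ|) := by
          apply mul_le_mul_of_nonneg_left (min_le_right _ _) (abs_nonneg θ)
      _ = Real.pi := by field_simp
  have hne : θ * min (ε / 2) (Real.pi / |θ|) ≠ 0 := mul_ne_zero hθ ht0.ne'
  rcases eq_or_ne n 0 with hn0 | hn0
  · rw [hn0, Int.cast_zero, zero_mul] at hn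
    exact hne hn.symm
  · have h1 : (1 : ℝ) ≤ |(n : ℝ)| := by
      have h2 : (1 : ℤ) ≤ |n| := Int.one_le_abs hn0
      calc (1 : ℝ) = ((1 : ℤ) : ℝ) := by norm_num
        _ ≤ ((|n| : ℤ) : ℝ) := by exact_mod_cast h2
        _ = |(n : ℝ)| := by push_cast; ring
    have h2 : |θ * min (ε / 2) (Real.pi / |θ|)| = |(n : ℝ)| * (2 * Real.pi) := by
      rw [← hn, abs_mul, _root_.abs_of_pos (by linarith : (0:ℝ) < 2 * Real.pi)]
    nlinarith [htπ, h2, h1, hπ]
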